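/- Let V be a complex symmetric n × n matrix (Vᵀ = V) whose real part Re V is positive semidefinite as a real symmetric matrix. If z ∈ ℂ^n satisfies Vz = 0, then V(Re z) = 0 and V(Im z) = 0; that is, the kernel of V in ℂ^n is the complexification of its intersection with ℝ^n. In particular, Ker V ∩ ℝ^n = {0} implies that V is invertible. -/

import Mathlib

open Matrix

lemma mulVec_real_decomp (n : ℕ) (V : Matrix (Fin n) (Fin n) ℂ) (x : Fin n → ℝ) (i : Fin n) :
    (V *ᵥ (fun i => (x i : ℂ))) i =
      (((V.map Complex.re *ᵥ x) i : ℝ) : ℂ) + ((V.map Complex.im *ᵥ x) i : ℝ) * Complex.I := by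
  simp only [mulVec, dotProduct, map_apply, Finset.sum_apply]
  push_cast
  rw [Finset.sum_mul, ← Finset.sum_add_distrib]
  refine Finset.sum_congr rfl fun j _ => ?_
  rw [Complex.ext_iff]
  constructor <;> simp [Complex.mul_re, Complex.mul_im, Complex.add_re, Complex.add_im]

/-- if `V` is complex symmetric with positive semidefinite real part,
then `Vz = 0` implies `V(Re z) = 0` and `V(Im z) = 0` (the kernel of `V` is the
complexification of its real points); in particular `Ker V ∩ ℝ^n = {0}` implies `V`
invertible. -/
theorem kernel_is_complexification_of_real_kernel
    (n : ℕ) (V : Matrix (Fin n) (Fin n) ℂ) (hsym : V.IsSymm)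
    (hpsd : (V.map Complex.re).PosSemidef) :
    (∀ z : Fin n → ℂ, V *ᵥ z = 0 →
      V *ᵥ (fun i => ((z i).re : ℂ)) = 0 ∧ V *ᵥ (fun i => ((z i).im : ℂ)) = 0) ∧
    ((∀ x : Fin n → ℝ, V *ᵥ (fun i => (x i : ℂ)) = 0 → x = 0) → IsUnit V) := by
  set A := V.map Complex.re with hA
  set B := V.map Complex.im with hB
  have hAsym : A.IsSymm := hsym.map _
  have hBsym : B.IsSymm := hsym.map _
  have key : ∀ z : Fin n → ℂ, V *ᵥ z = 0 →
      V *ᵥ (fun i => ((z i).re : ℂ)) = 0 ∧ V *ᵥ (fun i => ((z i).im : ℂ)) = 0 := by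
    intro z hz
    set x : Fin n → ℝ := fun i => (z i).re with hx
    set y : Fin n → ℝ := fun i => (z i).im with hy
    -- real and imaginary parts of V z = 0
    have h1 : A *ᵥ x - B *ᵥ y = 0 := by
      funext i
      have := congrFun hz i
      have hre := congrArg Complex.re this
      simpa [mulVec, dotProduct, Complex.mul_re, Finset.sum_sub_distrib, x, y, A, B] using hre
    have h2 : A *ᵥ y + B *ᵥ x = 0 := by
      funext i
      have := congrFun hz i
      have him := congrArg Complex.im this
      simpa [mulVec, dotProduct, Complex.mul_im, Finset.sum_add_distrib, x, y, A, B,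
        add_comm] using him
    have h1' : A *ᵥ x = B *ᵥ y := by
      funext i; have := congrFun h1 i; simpa [sub_eq_zero] using this
    have h2' : A *ᵥ y = -(B *ᵥ x) := by
      funext i; have := congrFun h2 i
      simp only [Pi.add_apply, Pi.zero_apply] at this
      simp [Pi.neg_apply]; linarith
    -- x ⬝ A x + y ⬝ A y = 0
    have hsum : x ⬝ᵥ (A *ᵥ x) + y ⬝ᵥ (A *ᵥ y) = 0 := by
      rw [h1', h2', dotProduct_neg]
      have : x ⬝ᵥ (B *ᵥ y) = y ⬝ᵥ (B *ᵥ x) := by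
        rw [dotProduct_mulVec, dotProduct_comm, ← mulVec_transpose, hBsym.eq]
      rw [this]; ring
    have hx0 : x ⬝ᵥ (A *ᵥ x) = 0 := by
      have h1nn := hpsd.dotProduct_mulVec_nonneg x
      have h2nn := hpsd.dotProduct_mulVec_nonneg y
      have hx' : star x = x := by funext i; simp
      rw [show (star x ⬝ᵥ A *ᵥ x) = x ⬝ᵥ A *ᵥ x by rw [hx']] at h1nn
      have hy' : star y = y := by funext i; simp
      rw [show (star y ⬝ᵥ A *ᵥ y) = y ⬝ᵥ A *ᵥ y by rw [hy']] at h2nn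
      linarith
    have hy0 : y ⬝ᵥ (A *ᵥ y) = 0 := by
      have h1nn := hpsd.dotProduct_mulVec_nonneg x
      have h2nn := hpsd.dotProduct_mulVec_nonneg y
      have hx' : star x = x := by funext i; simp
      have hy' : star y = y := by funext i; simp
      rw [show (star x ⬝ᵥ A *ᵥ x) = x ⬝ᵥ A *ᵥ x by rw [hx']] at h1nn
      rw [show (star y ⬝ᵥ A *ᵥ y) = y ⬝ᵥ A *ᵥ y by rw [hy']] at h2nn
      linarith
    have hAx : A *ᵥ x = 0 := by
      have hx' : star x = x := by funext i; simp
      exact (hpsd.dotProduct_mulVec_zero_iff x).mp (by rw [hx']; exact hx0)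
    have hAy : A *ᵥ y = 0 := by
      have hy' : star y = y := by funext i; simp
      exact (hpsd.dotProduct_mulVec_zero_iff y).mp (by rw [hy']; exact hy0)
    have hBy : B *ᵥ y = 0 := by rw [← h1', hAx]
    have hBx : B *ᵥ x = 0 := by
      have := h2'.symm; rw [hAy] at this
      funext i; have := congrFun this i; simpa [neg_eq_zero] using this.symm
    constructor
    · funext i
      rw [mulVec_real_decomp n V x i]
      rw [congrFun hAx i, congrFun hBx i]; simp
    · funext i
      rw [mulVec_real_decomp n V y i]
      rw [congrFun hAy i, congrFun hBy i]; simp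
  refine ⟨key, fun hker => ?_⟩
  rw [← mulVec_injective_iff_isUnit]
  rw [Function.Injective]
  intro a b hab
  have hz : V *ᵥ (a - b) = 0 := by rw [mulVec_sub, hab, sub_self]
  obtain ⟨hre, him⟩ := key (a - b) hz
  have hzre : (fun i => ((a - b) i).re) = (0 : Fin n → ℝ) := hker _ hre
  have hzim : (fun i => ((a - b) i).im) = (0 : Fin n → ℝ) := hker _ him
  have : a - b = 0 := by
    funext i
    have h1 := congrFun hzre i
    have h2 := congrFun hzim i
    simp only [Pi.zero_apply] at h1 h2
    exact Complex.ext h1 h2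
  exact sub_eq_zero.mp this
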